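/- Let H be the horizontal plane {x ∈ ℝ³ : x₃ = z₀}, let c ∈ H, and let u, v ∈ ℝ³ be points with ‖u − c‖ ≤ r and ‖v − c‖ ≤ r, and suppose both points lie at vertical depth at least h below the plane, i.e., z₀ − u₃ ≥ h and z₀ − v₃ ≥ h, where 0 ≤ h ≤ r. Let u' = (u₁, u₂, z₀) be the vertical projection of u onto H. Then ‖u' − v‖ ≤ √(4r² − 3h²). -/

import Mathlib

/-- Vertical projection onto the horizontal plane `{x : x 2 = z₀}`. -/
noncomputable def projZ (z₀ : ℝ) (u : EuclideanSpace ℝ (Fin 3)) : EuclideanSpace ℝ (Fin 3) :=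
  WithLp.toLp 2 (fun i => if i = 2 then z₀ else u i)

theorem stmt0 (z₀ h r : ℝ) (c u v : EuclideanSpace ℝ (Fin 3))
    (hc : c 2 = z₀) (hu : ‖u - c‖ ≤ r) (hv : ‖v - c‖ ≤ r)
    (hud : z₀ - u 2 ≥ h) (hvd : z₀ - v 2 ≥ h) (hh : 0 ≤ h) (hhr : h ≤ r) :
    ‖projZ z₀ u - v‖ ≤ Real.sqrt (4 * r ^ 2 - 3 * h ^ 2) := by
  have key : ∀ x : EuclideanSpace ℝ (Fin 3), ‖x‖ ^ 2 = (x 0) ^ 2 + (x 1) ^ 2 + (x 2) ^ 2 := by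
    intro x
    rw [EuclideanSpace.norm_eq, Real.sq_sqrt (by positivity)]
    simp [Fin.sum_univ_three, Real.norm_eq_abs, sq_abs]
  have hr : (0 : ℝ) ≤ r := le_trans hh hhr
  have hu2 : ‖u - c‖ ^ 2 ≤ r ^ 2 := by nlinarith [norm_nonneg (u - c)]
  have hv2 : ‖v - c‖ ^ 2 ≤ r ^ 2 := by nlinarith [norm_nonneg (v - c)]
  rw [key] at hu2 hv2
  simp only [PiLp.sub_apply] at hu2 hv2
  rw [hc] at hu2 hv2
  have hM : (0:ℝ) ≤ 4 * r ^ 2 - 3 * h ^ 2 := by nlinarith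
  rw [Real.le_sqrt (norm_nonneg _) hM]
  rw [key]
  have h0 : (projZ z₀ u - v) 0 = u 0 - v 0 := by simp [projZ, PiLp.sub_apply]
  have h1 : (projZ z₀ u - v) 1 = u 1 - v 1 := by simp [projZ, PiLp.sub_apply]
  have h2 : (projZ z₀ u - v) 2 = z₀ - v 2 := by simp [projZ, PiLp.sub_apply]
  rw [h0, h1, h2]
  nlinarith [sq_nonneg ((u 0 - c 0) + (v 0 - c 0)), sq_nonneg ((u 1 - c 1) + (v 1 - c 1)),
    mul_self_le_mul_self hh hud, mul_self_le_mul_self hh hvd]
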